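/- Let 𝒜 and ℬ be profinite abelian groups and let b : 𝒜 × 𝒜 → ℬ be a continuous ℤ-bilinear alternating map (i.e. b is biadditive and b(a,a) = 0 for all a ∈ 𝒜). Then there exists a unique continuous group homomorphism φ : ∧²_prof 𝒜 → ℬ such that b = φ ∘ b_univ(𝒜). -/

import Mathlib

/-!
Statement 13: universal property of the profinite exterior square.  For profinite
abelian groups `𝒜`, `ℬ` and a continuous bilinear alternating map `b : 𝒜 × 𝒜 → ℬ`,
there is a unique continuous homomorphism `φ : ∧²_prof 𝒜 → ℬ` with
`b = φ ∘ b_univ(𝒜)`.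

Here `∧² M := (M ⊗_ℤ M)/⟨m ⊗ m⟩` and `∧²_prof 𝒜` is the inverse limit of the
groups `∧²(𝒜/U)` over the open subgroups `U` of `𝒜`, realized as the subgroup of
compatible families inside the product `∏_U ∧²(𝒜/U)` (each factor discrete).
-/

noncomputable section

open scoped TensorProduct

/-- The submodule of `M ⊗_ℤ M` generated by the elements `m ⊗ m`. -/
def wedgeRel (M : Type*) [AddCommGroup M] : Submodule ℤ (M ⊗[ℤ] M) :=
  Submodule.span ℤ {x | ∃ m : M, x = m ⊗ₜ[ℤ] m}

/-- The exterior square `∧² M = (M ⊗_ℤ M)/⟨m ⊗ m⟩` of an abelian group. -/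
def Wedge2 (M : Type*) [AddCommGroup M] : Type _ :=
  (M ⊗[ℤ] M) ⧸ wedgeRel M

instance (M : Type*) [AddCommGroup M] : AddCommGroup (Wedge2 M) :=
  inferInstanceAs (AddCommGroup ((M ⊗[ℤ] M) ⧸ wedgeRel M))

/-- In the profinite exterior square each factor `∧²(𝒜/U)` carries the discrete
topology. -/
instance (M : Type*) [AddCommGroup M] : TopologicalSpace (Wedge2 M) := ⊥

/-- `m ∧ m'`, the image of `m ⊗ m'` in `∧² M`. -/
def wedge {M : Type*} [AddCommGroup M] (m m' : M) : Wedge2 M :=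
  Submodule.Quotient.mk (m ⊗ₜ[ℤ] m')

/-- Functoriality of `∧²`. -/
def wedgeMap {M N : Type*} [AddCommGroup M] [AddCommGroup N] (f : M →+ N) :
    Wedge2 M →+ Wedge2 N :=
  (Submodule.mapQ (wedgeRel M) (wedgeRel N)
    (TensorProduct.map f.toIntLinearMap f.toIntLinearMap)
    (by
      rw [wedgeRel, Submodule.span_le]
      rintro x ⟨m, rfl⟩
      simp only [SetLike.mem_coe, Submodule.mem_comap, TensorProduct.map_tmul]
      exact Submodule.subset_span ⟨f m, rfl⟩)).toAddMonoidHom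

theorem wedgeMap_wedge {M N : Type*} [AddCommGroup M] [AddCommGroup N] (f : M →+ N)
    (m m' : M) : wedgeMap f (wedge m m') = wedge (f m) (f m') := by
  simp only [wedgeMap, wedge, LinearMap.toAddMonoidHom_coe, Submodule.mapQ_apply,
    TensorProduct.map_tmul]
  rfl

section Profinite

variable (A : Type*) [AddCommGroup A] [TopologicalSpace A]

/-- The open subgroups of `A`. -/
abbrev OpenSub : Type _ := {U : AddSubgroup A // IsOpen (U : Set A)}

/-- The transition map `∧²(A/U) → ∧²(A/V)` for `U ≤ V`. -/
def transMap {U V : OpenSub A} (h : U.1 ≤ V.1) :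
    Wedge2 (A ⧸ U.1) →+ Wedge2 (A ⧸ V.1) :=
  wedgeMap (QuotientAddGroup.map U.1 V.1 (AddMonoidHom.id A) (by simpa using h))

/-- The profinite exterior square `∧²_prof A = lim_U ∧²(A/U)`, as the subgroup of
compatible families in `∏_U ∧²(A/U)`. -/
def compatSub : AddSubgroup (∀ U : OpenSub A, Wedge2 (A ⧸ U.1)) where
  carrier := {x | ∀ (U V : OpenSub A) (h : U.1 ≤ V.1), transMap A h (x U) = x V}
  add_mem' := by
    intro a b ha hb U V h
    simp only [Pi.add_apply, map_add, ha U V h, hb U V h]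
  zero_mem' := by
    intro U V h
    simp only [Pi.zero_apply, map_zero]
  neg_mem' := by
    intro a ha U V h
    simp only [Pi.neg_apply, map_neg, ha U V h]

/-- The profinite exterior square, with the subspace topology of the product of the
(discrete) groups `∧²(A/U)`. -/
abbrev ProfWedge2 : Type _ := ↥(compatSub A)

/-- The universal continuous alternating map `b_univ : A × A → ∧²_prof A`,
`(a₁, a₂) ↦ a₁ ∧ a₂`. -/
def bUniv (a₁ a₂ : A) : ProfWedge2 A :=
  ⟨fun U => wedge ((a₁ : A ⧸ U.1)) ((a₂ : A ⧸ U.1)), by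
    intro U V h
    rw [transMap, wedgeMap_wedge]
    simp [QuotientAddGroup.map_mk]⟩

end Profinite


/-! ### Auxiliary lemmas for the proof -/

section AuxLemmas

/-- In a profinite additive group, every open neighbourhood of `0` contains an open
subgroup. -/
lemma exists_openAddSubgroup_sub' {G : Type*} [AddGroup G] [TopologicalSpace G]
    [IsTopologicalAddGroup G] [CompactSpace G] [T2Space G] [TotallyDisconnectedSpace G]
    {s : Set G} (hs : IsOpen s) (h0 : (0 : G) ∈ s) :
    ∃ U : AddSubgroup G, IsOpen (U : Set G) ∧ (U : Set G) ⊆ s := by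
  obtain ⟨K, hK, h0K, hKs⟩ := compact_exists_isClopen_in_isOpen hs h0
  obtain ⟨H, hH⟩ := IsTopologicalAddGroup.exist_openAddSubgroup_sub_clopen_nhds_of_zero hK h0K
  exact ⟨H.toAddSubgroup, H.isOpen, hH.trans hKs⟩

lemma finsetInfOpen {G : Type*} [AddGroup G] [TopologicalSpace G] {ι : Type*}
    (F : Finset ι) (V : ι → AddSubgroup G) (h : ∀ i, IsOpen (V i : Set G)) :
    IsOpen ((F.inf V : AddSubgroup G) : Set G) := by
  classical
  induction F using Finset.cons_induction with
  | empty => simpa using isOpen_univ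
  | cons a F haF ih => rw [Finset.inf_cons, AddSubgroup.coe_inf]; exact (h a).inter ih

/-- A biadditive map as an integer-bilinear map. -/
def biInt {M C : Type*} [AddCommGroup M] [AddCommGroup C] (f : M →+ M →+ C) :
    M →ₗ[ℤ] M →ₗ[ℤ] C where
  toFun m := (f m).toIntLinearMap
  map_add' m m' := by ext x; simp
  map_smul' n m := by ext x; simp

/-- Universal property of `Wedge2` for a single abelian group. -/
def wedgeLift {M C : Type*} [AddCommGroup M] [AddCommGroup C] (f : M →+ M →+ C)
    (hf : ∀ m, f m m = 0) : Wedge2 M →+ C :=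
  (Submodule.liftQ (wedgeRel M) (TensorProduct.lift (biInt f)) (by
    rw [wedgeRel, Submodule.span_le]
    rintro x ⟨m, rfl⟩
    simp only [SetLike.mem_coe, LinearMap.mem_ker, TensorProduct.lift.tmul]
    exact hf m)).toAddMonoidHom

theorem wedgeLift_wedge {M C : Type*} [AddCommGroup M] [AddCommGroup C] (f : M →+ M →+ C)
    (hf : ∀ m, f m m = 0) (m m' : M) : wedgeLift f hf (wedge m m') = f m m' := rfl

theorem wedge2_hom_ext {M C : Type*} [AddCommGroup M] [AddCommGroup C]
    {f g : Wedge2 M →+ C} (h : ∀ m m', f (wedge m m') = g (wedge m m')) : f = g := by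
  ext x
  obtain ⟨y, rfl⟩ := Submodule.Quotient.mk_surjective _ x
  induction y using TensorProduct.induction_on with
  | zero => rw [Submodule.Quotient.mk_zero]; exact (map_zero f).trans (map_zero g).symm
  | tmul m m' => exact h m m'
  | add y z hy hz =>
    rw [Submodule.Quotient.mk_add]
    exact (map_add f _ _).trans ((congrArg₂ (· + ·) hy hz).trans (map_add g _ _).symm)

theorem closure_wedge_quot {A : Type*} [AddCommGroup A] (U : AddSubgroup A) :
    AddSubgroup.closure
      {z : Wedge2 (A ⧸ U) | ∃ a₁ a₂ : A,
        z = wedge (QuotientAddGroup.mk a₁) (QuotientAddGroup.mk a₂)} = ⊤ := by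
  rw [eq_top_iff]
  rintro x -
  obtain ⟨y, rfl⟩ := Submodule.Quotient.mk_surjective _ x
  induction y using TensorProduct.induction_on with
  | zero => rw [Submodule.Quotient.mk_zero]; exact zero_mem _
  | tmul m m' =>
      obtain ⟨a₁, rfl⟩ := QuotientAddGroup.mk_surjective m
      obtain ⟨a₂, rfl⟩ := QuotientAddGroup.mk_surjective m'
      exact AddSubgroup.subset_closure ⟨a₁, a₂, rfl⟩
  | add y z hy hz => rw [Submodule.Quotient.mk_add]; exact add_mem hy hz

section Bilinear

variable {A B : Type*} [AddCommGroup A] [AddCommGroup B] (b : A × A → B)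

/-- `U` is small enough for `W`: `b` maps `U × A` and `A × U` into `W`. -/
def Good (W : AddSubgroup B) (U : AddSubgroup A) : Prop :=
  ∀ u ∈ U, ∀ a : A, b (u, a) ∈ W ∧ b (a, u) ∈ W

variable (hleft : ∀ a₁ a₂ c : A, b (a₁ + a₂, c) = b (a₁, c) + b (a₂, c))
  (hright : ∀ a c₁ c₂ : A, b (a, c₁ + c₂) = b (a, c₁) + b (a, c₂))

/-- The bilinear map induced by `b` on the quotients. -/
def quotBi (U : AddSubgroup A) (W : AddSubgroup B) (hg : Good b W U) :
    A ⧸ U →+ A ⧸ U →+ B ⧸ W := by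
  refine QuotientAddGroup.lift U (AddMonoidHom.mk'
    (fun a => QuotientAddGroup.lift U
      ((QuotientAddGroup.mk' W).comp (AddMonoidHom.mk' (fun c => b (a, c)) (hright a)))
      (fun u hu => (QuotientAddGroup.eq_zero_iff _).mpr ((hg u hu a).2))) ?_) ?_
  · intro a a'
    ext x
    simp [hleft]
    rfl
  · intro u hu
    ext x
    exact (QuotientAddGroup.eq_zero_iff _).mpr ((hg u hu x).1)

theorem quotBi_mk (U : AddSubgroup A) (W : AddSubgroup B) (hg : Good b W U) (a c : A) :
    quotBi b hleft hright U W hg (QuotientAddGroup.mk a) (QuotientAddGroup.mk c)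
      = QuotientAddGroup.mk (b (a, c)) := rfl

/-- The map `∧²(A/U) → B/W` induced by `b`. -/
def fUW (halt : ∀ a : A, b (a, a) = 0) (U : AddSubgroup A) (W : AddSubgroup B)
    (hg : Good b W U) : Wedge2 (A ⧸ U) →+ B ⧸ W :=
  wedgeLift (quotBi b hleft hright U W hg) (fun m => by
    induction m using QuotientAddGroup.induction_on with
    | H a => rw [quotBi_mk]; simp [halt a])

theorem fUW_wedge (halt : ∀ a : A, b (a, a) = 0) (U : AddSubgroup A) (W : AddSubgroup B)
    (hg : Good b W U) (a c : A) :
    fUW b hleft hright halt U W hg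
        (wedge (QuotientAddGroup.mk a) (QuotientAddGroup.mk c))
      = QuotientAddGroup.mk (b (a, c)) := rfl

end Bilinear

end AuxLemmas

theorem statement13
    (A : Type) [AddCommGroup A] [TopologicalSpace A] [IsTopologicalAddGroup A]
    [CompactSpace A] [T2Space A] [TotallyDisconnectedSpace A]
    (B : Type) [AddCommGroup B] [TopologicalSpace B] [IsTopologicalAddGroup B]
    [CompactSpace B] [T2Space B] [TotallyDisconnectedSpace B]
    (b : A × A → B) (hcont : Continuous b)
    (hleft : ∀ a₁ a₂ c : A, b (a₁ + a₂, c) = b (a₁, c) + b (a₂, c))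
    (hright : ∀ a c₁ c₂ : A, b (a, c₁ + c₂) = b (a, c₁) + b (a, c₂))
    (halt : ∀ a : A, b (a, a) = 0) :
    ∃! φ : ProfWedge2 A →+ B,
      Continuous ⇑φ ∧ ∀ a₁ a₂ : A, φ (bUniv A a₁ a₂) = b (a₁, a₂) := by
  classical
  have hb0l : ∀ a : A, b (0, a) = 0 := by
    intro a
    have h := hleft 0 0 a
    rw [add_zero] at h
    exact left_eq_add.mp h
  have hb0r : ∀ a : A, b (a, 0) = 0 := by
    intro a
    have h := hright a 0 0
    rw [add_zero] at h
    exact left_eq_add.mp h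
  have subMem : ∀ (W : AddSubgroup B) (c c' : B),
      (QuotientAddGroup.mk c : B ⧸ W) = QuotientAddGroup.mk c' → c - c' ∈ W := by
    intro W c c' h
    exact QuotientAddGroup.eq_iff_sub_mem.mp h
  have memSub : ∀ (W : AddSubgroup B) (c c' : B), c - c' ∈ W →
      (QuotientAddGroup.mk c : B ⧸ W) = QuotientAddGroup.mk c' := by
    intro W c c' h
    exact QuotientAddGroup.eq_iff_sub_mem.mpr h
  -- one-sided smallness
  have oneSide : ∀ (f : A × A → B), Continuous f → (∀ a, f (0, a) = 0) →
      ∀ W : OpenSub B, ∃ U : AddSubgroup A, IsOpen (U : Set A) ∧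
        ∀ u ∈ U, ∀ a : A, f (u, a) ∈ W.1 := by
    intro f hf hf0 W
    have hpre : IsOpen (f ⁻¹' (W.1 : Set B)) := W.2.preimage hf
    have hVt : ∀ a : A, ∃ (V : AddSubgroup A) (t : Set A),
        IsOpen (V : Set A) ∧ IsOpen t ∧ a ∈ t ∧ ∀ u ∈ V, ∀ x ∈ t, f (u, x) ∈ W.1 := by
      intro a
      have hmem : ((0 : A), a) ∈ f ⁻¹' (W.1 : Set B) := by
        simp only [Set.mem_preimage, hf0 a, SetLike.mem_coe]
        exact W.1.zero_mem
      obtain ⟨s, t, hs, ht, h0s, hat, hst⟩ := isOpen_prod_iff.mp hpre 0 a hmem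
      obtain ⟨V, hVo, hVs⟩ := exists_openAddSubgroup_sub' hs h0s
      exact ⟨V, t, hVo, ht, hat, fun u hu x hx => hst (Set.mk_mem_prod (hVs hu) hx)⟩
    choose V t hVo hto hat hm using hVt
    obtain ⟨F, hF⟩ := isCompact_univ.elim_finite_subcover t hto
      (fun x _ => Set.mem_iUnion.mpr ⟨x, hat x⟩)
    refine ⟨F.inf V, finsetInfOpen F V hVo, ?_⟩
    intro u hu a
    obtain ⟨i, hiF, hxt⟩ := Set.mem_iUnion₂.mp (hF (Set.mem_univ a))
    exact hm i u ((Finset.inf_le hiF : F.inf V ≤ V i) hu) a hxt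
  -- good open subgroups exist for every open W
  have hex : ∀ W : OpenSub B, ∃ U : AddSubgroup A, IsOpen (U : Set A) ∧ Good b W.1 U := by
    intro W
    obtain ⟨U₁, hU₁o, hU₁⟩ := oneSide b hcont hb0l W
    obtain ⟨U₂, hU₂o, hU₂⟩ := oneSide (b ∘ Prod.swap) (hcont.comp continuous_swap)
      (fun a => hb0r a) W
    refine ⟨U₁ ⊓ U₂, ?_, ?_⟩
    · rw [AddSubgroup.coe_inf]; exact hU₁o.inter hU₂o
    · intro u hu a
      exact ⟨hU₁ u hu.1 a, hU₂ u hu.2 a⟩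
  choose Uc hUco hUcg using hex
  -- independence of the choice of good open subgroup
  have indep : ∀ (x : ProfWedge2 A) (W : OpenSub B) (U : OpenSub A) (hg : Good b W.1 U.1),
      fUW b hleft hright halt U.1 W.1 hg (x.1 U)
        = fUW b hleft hright halt (Uc W) W.1 (hUcg W) (x.1 ⟨Uc W, hUco W⟩) := by
    intro x W U hg
    have h0o : IsOpen ((U.1 ⊓ Uc W : AddSubgroup A) : Set A) := by
      rw [AddSubgroup.coe_inf]; exact U.2.inter (hUco W)
    have hg₀ : Good b W.1 (U.1 ⊓ Uc W) := fun u hu => hg u hu.1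
    have key : ∀ (V : OpenSub A) (hgV : Good b W.1 V.1)
        (h : (⟨U.1 ⊓ Uc W, h0o⟩ : OpenSub A).1 ≤ V.1),
        fUW b hleft hright halt V.1 W.1 hgV (x.1 V)
          = fUW b hleft hright halt (U.1 ⊓ Uc W) W.1 hg₀ (x.1 ⟨U.1 ⊓ Uc W, h0o⟩) := by
      intro V hgV h
      rw [← x.2 ⟨U.1 ⊓ Uc W, h0o⟩ V h]
      have hcomp : (fUW b hleft hright halt V.1 W.1 hgV).comp (transMap A h)
          = fUW b hleft hright halt (U.1 ⊓ Uc W) W.1 hg₀ := by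
        refine wedge2_hom_ext fun m m' => ?_
        obtain ⟨a₁, rfl⟩ := QuotientAddGroup.mk_surjective m
        obtain ⟨a₂, rfl⟩ := QuotientAddGroup.mk_surjective m'
        rw [AddMonoidHom.comp_apply, transMap, wedgeMap_wedge]
        simp only [QuotientAddGroup.map_mk, AddMonoidHom.id_apply]
        rw [fUW_wedge, fUW_wedge]
      exact DFunLike.congr_fun hcomp (x.1 ⟨U.1 ⊓ Uc W, h0o⟩)
    exact (key U hg inf_le_left).trans (key ⟨Uc W, hUco W⟩ (hUcg W) inf_le_right).symm
  -- compatibility along inclusions of open subgroups of B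
  have compatW : ∀ (x : ProfWedge2 A) (W W' : OpenSub B) (h : W.1 ≤ W'.1),
      QuotientAddGroup.map W.1 W'.1 (AddMonoidHom.id B) (by simpa using h)
          (fUW b hleft hright halt (Uc W) W.1 (hUcg W) (x.1 ⟨Uc W, hUco W⟩))
        = fUW b hleft hright halt (Uc W') W'.1 (hUcg W') (x.1 ⟨Uc W', hUco W'⟩) := by
    intro x W W' h
    have hg' : Good b W'.1 (Uc W) := fun u hu a =>
      ⟨h (hUcg W u hu a).1, h (hUcg W u hu a).2⟩
    rw [← indep x W' ⟨Uc W, hUco W⟩ hg']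
    have hcomp : (QuotientAddGroup.map W.1 W'.1 (AddMonoidHom.id B) (by simpa using h)).comp
        (fUW b hleft hright halt (Uc W) W.1 (hUcg W))
        = fUW b hleft hright halt (Uc W) W'.1 hg' := by
      refine wedge2_hom_ext fun m m' => ?_
      obtain ⟨a₁, rfl⟩ := QuotientAddGroup.mk_surjective m
      obtain ⟨a₂, rfl⟩ := QuotientAddGroup.mk_surjective m'
      rw [AddMonoidHom.comp_apply, fUW_wedge, fUW_wedge]
      simp [QuotientAddGroup.map_mk]
    exact DFunLike.congr_fun hcomp (x.1 ⟨Uc W, hUco W⟩)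
  haveI : Nonempty (OpenSub B) := ⟨⟨⊤, by rw [AddSubgroup.coe_top]; exact isOpen_univ⟩⟩
  -- existence and uniqueness of the limit point
  have exu : ∀ x : ProfWedge2 A, ∃! c : B, ∀ W : OpenSub B,
      (QuotientAddGroup.mk c : B ⧸ W.1)
        = fUW b hleft hright halt (Uc W) W.1 (hUcg W) (x.1 ⟨Uc W, hUco W⟩) := by
    intro x
    set Z : OpenSub B → Set B := fun W =>
      {c | (QuotientAddGroup.mk c : B ⧸ W.1)
        = fUW b hleft hright halt (Uc W) W.1 (hUcg W) (x.1 ⟨Uc W, hUco W⟩)} with hZ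
    have hZne : ∀ W, (Z W).Nonempty := by
      intro W
      obtain ⟨c, hc⟩ := QuotientAddGroup.mk_surjective
        (fUW b hleft hright halt (Uc W) W.1 (hUcg W) (x.1 ⟨Uc W, hUco W⟩))
      exact ⟨c, hc⟩
    have hZcl : ∀ W, IsClosed (Z W) := by
      intro W
      obtain ⟨c₀, hc₀⟩ := hZne W
      have hZeq : Z W = (fun c => c - c₀) ⁻¹' (W.1 : Set B) := by
        ext c
        simp only [hZ, Set.mem_setOf_eq, Set.mem_preimage, SetLike.mem_coe]
        rw [← hc₀]
        exact ⟨fun h => subMem W.1 c c₀ h, fun h => memSub W.1 c c₀ h⟩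
      rw [hZeq]
      exact (AddSubgroup.isClosed_of_isOpen W.1 W.2).preimage (continuous_sub_right c₀)
    have hZcp : ∀ W, IsCompact (Z W) := fun W => (hZcl W).isCompact
    have hdir : Directed (· ⊇ ·) Z := by
      intro W W'
      have ho : IsOpen ((W.1 ⊓ W'.1 : AddSubgroup B) : Set B) := by
        rw [AddSubgroup.coe_inf]; exact W.2.inter W'.2
      refine ⟨⟨W.1 ⊓ W'.1, ho⟩, ?_, ?_⟩
      · intro c hc
        have h2 := congrArg (QuotientAddGroup.map (W.1 ⊓ W'.1) W.1 (AddMonoidHom.id B)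
          (by simpa using (inf_le_left : W.1 ⊓ W'.1 ≤ W.1))) hc
        rw [QuotientAddGroup.map_mk] at h2
        simp only [AddMonoidHom.id_apply] at h2
        exact h2.trans (compatW x ⟨W.1 ⊓ W'.1, ho⟩ W inf_le_left)
      · intro c hc
        have h2 := congrArg (QuotientAddGroup.map (W.1 ⊓ W'.1) W'.1 (AddMonoidHom.id B)
          (by simpa using (inf_le_right : W.1 ⊓ W'.1 ≤ W'.1))) hc
        rw [QuotientAddGroup.map_mk] at h2
        simp only [AddMonoidHom.id_apply] at h2
        exact h2.trans (compatW x ⟨W.1 ⊓ W'.1, ho⟩ W' inf_le_right)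
    obtain ⟨c, hc⟩ := IsCompact.nonempty_iInter_of_directed_nonempty_isCompact_isClosed
      Z hdir hZne hZcp hZcl
    refine ⟨c, fun W => Set.mem_iInter.mp hc W, ?_⟩
    intro c' hc'
    by_contra hne
    have hd0 : c' - c ≠ 0 := sub_ne_zero.mpr hne
    obtain ⟨U, hUo, hUs⟩ := exists_openAddSubgroup_sub'
      (isOpen_compl_singleton : IsOpen ({c' - c}ᶜ : Set B))
      (Set.mem_compl_singleton_iff.mpr (Ne.symm hd0))
    have hmemU : c' - c ∈ U := by
      have h1 := hc' ⟨U, hUo⟩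
      have h2 := Set.mem_iInter.mp hc ⟨U, hUo⟩
      exact subMem U c' c (h1.trans h2.symm)
    exact hUs hmemU rfl
  -- the underlying function of φ
  choose φ₀ hφ₀ hφuniq using exu
  -- additivity
  have hadd : ∀ x y : ProfWedge2 A, φ₀ (x + y) = φ₀ x + φ₀ y := by
    intro x y
    refine (hφuniq (x + y) (φ₀ x + φ₀ y) ?_).symm
    intro W
    have hxy : ((x + y).1 ⟨Uc W, hUco W⟩ : Wedge2 (A ⧸ Uc W))
        = x.1 ⟨Uc W, hUco W⟩ + y.1 ⟨Uc W, hUco W⟩ := rfl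
    rw [QuotientAddGroup.mk_add, hφ₀ x W, hφ₀ y W, hxy, map_add]
  -- the universal property
  have hwedge : ∀ (a₁ a₂ : A) (W : OpenSub B),
      fUW b hleft hright halt (Uc W) W.1 (hUcg W) ((bUniv A a₁ a₂).1 ⟨Uc W, hUco W⟩)
        = QuotientAddGroup.mk (b (a₁, a₂)) :=
    fun a₁ a₂ W => fUW_wedge b hleft hright halt (Uc W) W.1 (hUcg W) a₁ a₂
  have hb : ∀ a₁ a₂ : A, φ₀ (bUniv A a₁ a₂) = b (a₁, a₂) := by
    intro a₁ a₂
    exact (hφuniq (bUniv A a₁ a₂) (b (a₁, a₂)) (fun W => (hwedge a₁ a₂ W).symm)).symm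
  -- continuity
  have hcontφ : Continuous φ₀ := by
    rw [continuous_def]
    intro s hs
    rw [isOpen_iff_forall_mem_open]
    intro x hx
    have h0 : (0 : B) ∈ (fun w => φ₀ x + w) ⁻¹' s := by
      simpa using hx
    obtain ⟨W, hWo, hWs⟩ := exists_openAddSubgroup_sub'
      (hs.preimage (continuous_const.add continuous_id)) h0
    haveI : DiscreteTopology (Wedge2 (A ⧸ Uc ⟨W, hWo⟩)) := ⟨rfl⟩
    refine ⟨(fun y : ProfWedge2 A => y.1 ⟨Uc ⟨W, hWo⟩, hUco ⟨W, hWo⟩⟩) ⁻¹'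
      {x.1 ⟨Uc ⟨W, hWo⟩, hUco ⟨W, hWo⟩⟩}, ?_, ?_, rfl⟩
    · intro y hy
      rw [Set.mem_preimage, Set.mem_singleton_iff] at hy
      have hval : (QuotientAddGroup.mk (φ₀ y) : B ⧸ W) = QuotientAddGroup.mk (φ₀ x) := by
        rw [hφ₀ y ⟨W, hWo⟩, hφ₀ x ⟨W, hWo⟩, hy]
      have hmem : φ₀ y - φ₀ x ∈ W := subMem W _ _ hval
      have := hWs hmem
      simp only [Set.mem_preimage, Pi.add_apply, id_eq] at this
      rwa [show φ₀ x + (φ₀ y - φ₀ x) = φ₀ y from by abel] at this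
    · exact ((continuous_apply _).comp continuous_subtype_val).isOpen_preimage _
        (isOpen_discrete _)
  refine ⟨AddMonoidHom.mk' φ₀ hadd, ⟨hcontφ, hb⟩, ?_⟩
  -- uniqueness
  intro ψ hψ
  obtain ⟨hψc, hψb⟩ := hψ
  -- the set of wedges of pairs
  set S : Set (ProfWedge2 A) := Set.range (fun p : A × A => bUniv A p.1 p.2) with hS
  have hdense : Dense ((AddSubgroup.closure S : AddSubgroup (ProfWedge2 A)) : Set (ProfWedge2 A)) := by
    rw [dense_iff_inter_open]
    intro O hO hOne
    obtain ⟨x, hxO⟩ := hOne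
    obtain ⟨O', hO', rfl⟩ := isOpen_induced_iff.mp hO
    obtain ⟨I, u, hIu, hsub⟩ := isOpen_pi_iff.mp hO' x.1 hxO
    have hU₀o : IsOpen ((I.inf (fun i : OpenSub A => i.1) : AddSubgroup A) : Set A) :=
      finsetInfOpen I _ (fun i => i.2)
    set U₀ : OpenSub A := ⟨I.inf (fun i : OpenSub A => i.1), hU₀o⟩ with hU₀
    set e : ProfWedge2 A →+ Wedge2 (A ⧸ U₀.1) :=
      (Pi.evalAddMonoidHom (fun U : OpenSub A => Wedge2 (A ⧸ U.1)) U₀).comp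
        (compatSub A).subtype with he
    have hmap : x.1 U₀ ∈ AddSubgroup.map e (AddSubgroup.closure S) := by
      rw [AddMonoidHom.map_closure]
      have hsubs : {z : Wedge2 (A ⧸ U₀.1) | ∃ a₁ a₂ : A,
          z = wedge (QuotientAddGroup.mk a₁) (QuotientAddGroup.mk a₂)} ⊆ e '' S := by
        rintro z ⟨a₁, a₂, rfl⟩
        exact ⟨bUniv A a₁ a₂, ⟨(a₁, a₂), rfl⟩, rfl⟩
      have hle : (⊤ : AddSubgroup (Wedge2 (A ⧸ U₀.1))) ≤ AddSubgroup.closure (e '' S) := by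
        rw [← closure_wedge_quot U₀.1]
        exact AddSubgroup.closure_mono hsubs
      exact hle (AddSubgroup.mem_top _)
    obtain ⟨y, hyS, hye⟩ := hmap
    refine ⟨y, ?_, hyS⟩
    rw [Set.mem_preimage]
    apply hsub
    intro i hiI
    have hle : U₀.1 ≤ i.1 := Finset.inf_le hiI
    have hyx : y.1 i = x.1 i := by
      rw [← y.2 U₀ i hle, ← x.2 U₀ i hle]
      exact congrArg (transMap A hle) hye
    rw [hyx]
    exact (hIu i hiI).2
  have heqS : Set.EqOn ⇑ψ ⇑(AddMonoidHom.mk' φ₀ hadd) S := by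
    rintro z ⟨⟨a₁, a₂⟩, rfl⟩
    show ψ (bUniv A a₁ a₂) = φ₀ (bUniv A a₁ a₂)
    rw [hψb a₁ a₂, hb a₁ a₂]
  have heqcl : Set.EqOn ⇑ψ ⇑(AddMonoidHom.mk' φ₀ hadd)
      ((AddSubgroup.closure S : AddSubgroup (ProfWedge2 A)) : Set (ProfWedge2 A)) :=
    AddMonoidHom.eqOn_closure heqS
  exact DFunLike.coe_injective (Continuous.ext_on hdense hψc hcontφ heqcl)
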